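/- For k = 1, 2, let π_k be a unitary representation of a finite group G_k on a complex Hilbert space H_k, and suppose η_k ∈ H_k does phase retrieval for π_k. Then the vector η₁ ⊗ η₂ does phase retrieval for the outer tensor product representation π₁ ⊗ π₂ of G₁ × G₂ realized on Hilbert–Schmidt operators; concretely, for all bounded linear operators A, B : H₂ → H₁, if |⟨A (π₂(g₂)η₂), π₁(g₁)η₁⟩| = |⟨B (π₂(g₂)η₂), π₁(g₁)η₁⟩| for all (g₁, g₂) ∈ G₁ × G₂, then there exists c ∈ ℂ with |c| = 1 and A = c • B. -/

import Mathlib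

def DoesPhaseRetrieval {H : Type*} [NormedAddCommGroup H] [InnerProductSpace ℂ H]
    {I : Type*} (x : I → H) : Prop :=
  ∀ f g : H, (∀ i : I, ‖(inner ℂ f (x i) : ℂ)‖ = ‖(inner ℂ g (x i) : ℂ)‖) →
    ∃ c : ℂ, ‖c‖ = 1 ∧ f = c • g

lemma pr_total {H : Type*} [NormedAddCommGroup H] [InnerProductSpace ℂ H]
    {I : Type*} {x : I → H} (hx : DoesPhaseRetrieval x) {f : H}
    (hf : ∀ i, (inner ℂ f (x i) : ℂ) = 0) : f = 0 := by
  obtain ⟨c, -, hc⟩ := hx f 0 fun i => by simp [hf i]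
  simpa using hc

lemma pr_span_top {H : Type*} [NormedAddCommGroup H] [InnerProductSpace ℂ H]
    {I : Type*} [Finite I] {x : I → H} (hx : DoesPhaseRetrieval x) :
    Submodule.span ℂ (Set.range x) = ⊤ := by
  haveI : FiniteDimensional ℂ (Submodule.span ℂ (Set.range x)) :=
    FiniteDimensional.span_of_finite ℂ (Set.finite_range x)
  rw [← Submodule.orthogonal_eq_bot_iff, Submodule.eq_bot_iff]
  intro f hf
  refine pr_total hx fun i => ?_
  have h := (Submodule.mem_orthogonal _ f).1 hf (x i) (Submodule.subset_span ⟨i, rfl⟩)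
  rw [← inner_conj_symm, h, map_zero]

lemma pr_findim {H : Type*} [NormedAddCommGroup H] [InnerProductSpace ℂ H]
    {I : Type*} [Finite I] {x : I → H} (hx : DoesPhaseRetrieval x) :
    FiniteDimensional ℂ H :=
  ⟨Submodule.fg_def.2 ⟨Set.range x, Set.finite_range x, pr_span_top hx⟩⟩

lemma clm_ext_on {H₁ H₂ : Type*} [NormedAddCommGroup H₁] [InnerProductSpace ℂ H₁]
    [NormedAddCommGroup H₂] [InnerProductSpace ℂ H₂] {A B : H₂ →L[ℂ] H₁} {s : Set H₂}
    (hs : Submodule.span ℂ s = ⊤) (h : ∀ w ∈ s, A w = B w) : A = B :=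
  ContinuousLinearMap.coe_injective (LinearMap.ext_on hs h)

theorem phase_retrieval_outer_tensor_product
    {G₁ G₂ : Type*} [Group G₁] [Group G₂] [Finite G₁] [Finite G₂]
    {H₁ : Type*} [NormedAddCommGroup H₁] [InnerProductSpace ℂ H₁]
    {H₂ : Type*} [NormedAddCommGroup H₂] [InnerProductSpace ℂ H₂]
    (π₁ : G₁ →* (H₁ ≃ₗᵢ[ℂ] H₁)) (π₂ : G₂ →* (H₂ ≃ₗᵢ[ℂ] H₂))
    (η₁ : H₁) (η₂ : H₂)
    (hη₁ : DoesPhaseRetrieval (fun g : G₁ => π₁ g η₁))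
    (hη₂ : DoesPhaseRetrieval (fun g : G₂ => π₂ g η₂))
    (A B : H₂ →L[ℂ] H₁)
    (hAB : ∀ g : G₁ × G₂,
      ‖(inner ℂ (A (π₂ g.2 η₂)) (π₁ g.1 η₁) : ℂ)‖ =
        ‖(inner ℂ (B (π₂ g.2 η₂)) (π₁ g.1 η₁) : ℂ)‖) :
    ∃ c : ℂ, ‖c‖ = 1 ∧ A = c • B := by
  haveI : FiniteDimensional ℂ H₁ := pr_findim hη₁
  haveI : FiniteDimensional ℂ H₂ := pr_findim hη₂
  -- columnwise constants
  have col : ∀ g₂ : G₂, ∃ c : ℂ, ‖c‖ = 1 ∧ A (π₂ g₂ η₂) = c • B (π₂ g₂ η₂) :=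
    fun g₂ => hη₁ _ _ fun g₁ => hAB (g₁, g₂)
  -- rowwise constants (via adjoints)
  have row : ∀ g₁ : G₁, ∃ e : ℂ, ‖e‖ = 1 ∧ ∀ w : H₂,
      (inner ℂ (A w) (π₁ g₁ η₁) : ℂ) = e * inner ℂ (B w) (π₁ g₁ η₁) := by
    intro g₁
    have side : ∀ g₂ : G₂,
        ‖(inner ℂ (ContinuousLinearMap.adjoint A (π₁ g₁ η₁)) ((fun g : G₂ => π₂ g η₂) g₂) : ℂ)‖ =
          ‖(inner ℂ (ContinuousLinearMap.adjoint B (π₁ g₁ η₁)) ((fun g : G₂ => π₂ g η₂) g₂) : ℂ)‖ := by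
      intro g₂
      simp only [ContinuousLinearMap.adjoint_inner_left]
      rw [norm_inner_symm, norm_inner_symm (π₁ g₁ η₁)]
      exact hAB (g₁, g₂)
    obtain ⟨e, he, heq⟩ := hη₂ (ContinuousLinearMap.adjoint A (π₁ g₁ η₁))
        (ContinuousLinearMap.adjoint B (π₁ g₁ η₁)) side
    refine ⟨e, he, fun w => ?_⟩
    rw [← ContinuousLinearMap.adjoint_inner_right, heq, inner_smul_right,
      ContinuousLinearMap.adjoint_inner_right]
  by_cases hB0 : ∀ g₂ : G₂, B (π₂ g₂ η₂) = 0
  · refine ⟨1, by norm_num, clm_ext_on (pr_span_top hη₂) ?_⟩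
    rintro w ⟨g₂, rfl⟩
    obtain ⟨c, -, hc⟩ := col g₂
    simp only [ContinuousLinearMap.smul_apply]
    rw [hc, hB0 g₂, smul_zero, smul_zero]
  · push_neg at hB0
    obtain ⟨g0, hg0⟩ := hB0
    obtain ⟨c, hc1, hc⟩ := col g0
    refine ⟨c, hc1, clm_ext_on (pr_span_top hη₂) ?_⟩
    rintro w ⟨g₂, rfl⟩
    simp only [ContinuousLinearMap.smul_apply]
    obtain ⟨c', hc'1, hc'⟩ := col g₂
    by_cases hz : B (π₂ g₂ η₂) = 0
    · rw [hc', hz, smul_zero, smul_zero]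
    · rcases eq_or_ne c' c with rfl | hcc
      · exact hc'
      exfalso
      -- disjoint supports of B(π₂ g0 η₂) and B(π₂ g₂ η₂) w.r.t. the orbit of η₁
      have hdisj : ∀ g₁ : G₁, (inner ℂ (B (π₂ g0 η₂)) (π₁ g₁ η₁) : ℂ) = 0 ∨
          (inner ℂ (B (π₂ g₂ η₂)) (π₁ g₁ η₁) : ℂ) = 0 := by
        intro g₁
        by_contra hcon
        push_neg at hcon
        obtain ⟨hn0, hn⟩ := hcon
        obtain ⟨e, -, he⟩ := row g₁
        have e1 : (starRingEnd ℂ) c = e := by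
          have h := he (π₂ g0 η₂)
          rw [hc, inner_smul_left] at h
          exact mul_right_cancel₀ hn0 h
        have e2 : (starRingEnd ℂ) c' = e := by
          have h := he (π₂ g₂ η₂)
          rw [hc', inner_smul_left] at h
          exact mul_right_cancel₀ hn h
        exact hcc (star_injective (e2.trans e1.symm))
      have side : ∀ g₁ : G₁,
          ‖(inner ℂ (B (π₂ g0 η₂) + B (π₂ g₂ η₂)) ((fun g : G₁ => π₁ g η₁) g₁) : ℂ)‖ =
            ‖(inner ℂ (B (π₂ g0 η₂) - B (π₂ g₂ η₂)) ((fun g : G₁ => π₁ g η₁) g₁) : ℂ)‖ := by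
        intro g₁
        rcases hdisj g₁ with h | h <;>
          simp [inner_add_left, inner_sub_left, h]
      obtain ⟨μ, hμ1, hμ⟩ := hη₁ (B (π₂ g0 η₂) + B (π₂ g₂ η₂))
          (B (π₂ g0 η₂) - B (π₂ g₂ η₂)) side
      have key : (1 + μ) • B (π₂ g₂ η₂) = (μ - 1) • B (π₂ g0 η₂) := by
          have h := hμ
          rw [smul_sub] at h
          rw [add_smul, sub_smul, one_smul, one_smul]
          have := congrArg (fun z => z + μ • B (π₂ g₂ η₂) - B (π₂ g0 η₂)) h
          abel_nf
          abel_nf at this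
          linear_combination (norm := abel) this
      rcases eq_or_ne μ (-1) with rfl | hm1
      · apply hg0
        have : (0 : ℂ) • B (π₂ g₂ η₂) = (-2 : ℂ) • B (π₂ g0 η₂) := by
          convert key using 2 <;> ring
        rw [zero_smul] at this
        have h2 : ((-2 : ℂ))⁻¹ • ((-2 : ℂ) • B (π₂ g0 η₂)) = 0 := by rw [← this, smul_zero]
        rwa [inv_smul_smul₀ (by norm_num)] at h2
      · have h1μ : (1 + μ) ≠ 0 := fun h => hm1 (by linear_combination h)
        have hlam : B (π₂ g₂ η₂) = ((1 + μ)⁻¹ * (μ - 1)) • B (π₂ g0 η₂) := by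
          rw [mul_smul, ← key, inv_smul_smul₀ h1μ]
        rcases eq_or_ne μ 1 with rfl | hm2
        · apply hz
          rw [hlam]
          norm_num
        · have hl0 : ((1 + μ)⁻¹ * (μ - 1)) ≠ 0 :=
            mul_ne_zero (inv_ne_zero h1μ) (sub_ne_zero.2 hm2)
          -- pick g₁ with ⟪B(π₂ g0 η₂), π₁ g₁ η₁⟫ ≠ 0
          have : ∃ g₁ : G₁, (inner ℂ (B (π₂ g0 η₂)) (π₁ g₁ η₁) : ℂ) ≠ 0 := by
            by_contra hall
            push_neg at hall
            exact hg0 (pr_total hη₁ hall)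
          obtain ⟨g₁, hg₁⟩ := this
          rcases hdisj g₁ with h | h
          · exact hg₁ h
          · apply hg₁
            rw [hlam, inner_smul_left] at h
            exact (mul_eq_zero.1 h).resolve_left (by
              simp only [map_eq_zero]
              exact hl0)
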